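/- (Theorem 1(ii)) If q > b/(a+b), then H_q minimizes the expected misclassification cost L_{a,b} among all RDCs with predicted positive rate at most α: for every RDC H with E[H] ≤ α, L_{a,b}(H_q) ≤ L_{a,b}(H). -/

import Mathlib

open MeasureTheory Set

/-- A randomized decision classifier (RDC): an `ℋ`-measurable random variable
with values in the unit interval. -/
def IsRDC {Ω : Type*} (ℋ : MeasurableSpace Ω) (H : Ω → ℝ) : Prop :=
  Measurable[ℋ] H ∧ ∀ ω, H ω ∈ Set.Icc (0 : ℝ) 1

/-- The optimal RDC `H_q` obtained by thresholding the posterior probability `η` at `q`,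
with randomization on the event `{η = q}` calibrated so that the predicted positive
rate equals `α`. -/
noncomputable def Hq {Ω : Type*} [MeasurableSpace Ω] (P : Measure Ω) (η : Ω → ℝ)
    (α q : ℝ) : Ω → ℝ := fun ω =>
  if P {ω' | η ω' = q} = 0 then {ω' | η ω' > q}.indicator (fun _ => (1 : ℝ)) ω
  else {ω' | η ω' > q}.indicator (fun _ => (1 : ℝ)) ω +
    ((α - (P {ω' | η ω' > q}).toReal) / (P {ω' | η ω' = q}).toReal) *
      {ω' | η ω' = q}.indicator (fun _ => (1 : ℝ)) ω

/-- Expected misclassification cost `L_{a,b}(H) = a·E[(1−H)·1_A] + b·E[H·1_{Aᶜ}]`. -/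
noncomputable def cost {Ω : Type*} [MeasurableSpace Ω] (P : Measure Ω) (A : Set Ω)
    (a b : ℝ) (H : Ω → ℝ) : ℝ :=
  a * ∫ ω, (1 - H ω) * A.indicator (fun _ => (1 : ℝ)) ω ∂P +
    b * ∫ ω, H ω * Aᶜ.indicator (fun _ => (1 : ℝ)) ω ∂P

private lemma abs_le_one_of_Icc {x : ℝ} (h : x ∈ Set.Icc (0:ℝ) 1) : |x| ≤ 1 :=
  abs_le.mpr ⟨by linarith [h.1], h.2⟩

private lemma ind_mem {Ω : Type*} (s : Set Ω) (ω : Ω) :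
    s.indicator (fun _ => (1:ℝ)) ω ∈ Set.Icc (0:ℝ) 1 := by
  by_cases h : ω ∈ s <;> simp [h]

private lemma integrable_of_bdd {Ω : Type*} [MeasurableSpace Ω] {P : Measure Ω}
    [IsFiniteMeasure P] {f : Ω → ℝ} (hf : Measurable f) {C : ℝ}
    (h : ∀ ω, |f ω| ≤ C) : Integrable f P :=
  Integrable.mono' (integrable_const C) hf.aestronglyMeasurable
    (Filter.Eventually.of_forall fun ω => by simpa using h ω)

private lemma cost_eq {Ω : Type*} [𝒜 : MeasurableSpace Ω] (P : Measure Ω)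
    [IsProbabilityMeasure P] (A : Set Ω) (hA : MeasurableSet A) (a b : ℝ)
    (K η : Ω → ℝ) (hK : Measurable K) (hK01 : ∀ ω, K ω ∈ Set.Icc (0:ℝ) 1)
    (hηM : Measurable η) (hη01 : ∀ ω, η ω ∈ Set.Icc (0:ℝ) 1)
    (hcond : ∫ ω, η ω * K ω ∂P = ∫ ω, A.indicator (fun _ => (1:ℝ)) ω * K ω ∂P) :
    cost P A a b K = a * (P A).toReal + b * (∫ ω, K ω ∂P)
      - (a + b) * ∫ ω, K ω * η ω ∂P := by
  have hKabs : ∀ ω, |K ω| ≤ 1 := fun ω => abs_le_one_of_Icc (hK01 ω)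
  have hindM : Measurable (A.indicator (fun _ => (1:ℝ))) := measurable_const.indicator hA
  have habs_mul : ∀ (f g : Ω → ℝ), (∀ ω, |f ω| ≤ 1) → (∀ ω, |g ω| ≤ 1) →
      ∀ ω, |f ω * g ω| ≤ 1 := by
    intro f g hf hg ω
    rw [abs_mul]
    exact mul_le_one₀ (hf ω) (abs_nonneg _) (hg ω)
  have hindabs : ∀ ω, |A.indicator (fun _ => (1:ℝ)) ω| ≤ 1 :=
    fun ω => abs_le_one_of_Icc (ind_mem A ω)
  have hηabs : ∀ ω, |η ω| ≤ 1 := fun ω => abs_le_one_of_Icc (hη01 ω)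
  have int_ind : Integrable (A.indicator (fun _ => (1:ℝ))) P :=
    integrable_of_bdd hindM hindabs
  have int_K : Integrable K P := integrable_of_bdd hK hKabs
  have int_Kind : Integrable (fun ω => K ω * A.indicator (fun _ => (1:ℝ)) ω) P :=
    integrable_of_bdd (hK.mul hindM) (habs_mul _ _ hKabs hindabs)
  have int_Kη : Integrable (fun ω => K ω * η ω) P :=
    integrable_of_bdd (hK.mul hηM) (habs_mul _ _ hKabs hηabs)
  have hcond' : ∫ ω, K ω * A.indicator (fun _ => (1:ℝ)) ω ∂P = ∫ ω, K ω * η ω ∂P := by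
    have h1 : ∀ ω, K ω * A.indicator (fun _ => (1:ℝ)) ω
        = A.indicator (fun _ => (1:ℝ)) ω * K ω := fun ω => mul_comm _ _
    have h2 : ∀ ω, K ω * η ω = η ω * K ω := fun ω => mul_comm _ _
    simp only [h1, h2]
    exact hcond.symm
  have e1 : ∫ ω, (1 - K ω) * A.indicator (fun _ => (1:ℝ)) ω ∂P
      = (P A).toReal - ∫ ω, K ω * η ω ∂P := by
    have : (fun ω => (1 - K ω) * A.indicator (fun _ => (1:ℝ)) ω)
        = fun ω => A.indicator (fun _ => (1:ℝ)) ω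
          - K ω * A.indicator (fun _ => (1:ℝ)) ω := by
      funext ω; ring
    rw [this, integral_sub int_ind int_Kind, hcond']
    congr 1
    exact integral_indicator_one (μ := P) hA
  have e2 : ∫ ω, K ω * Aᶜ.indicator (fun _ => (1:ℝ)) ω ∂P
      = (∫ ω, K ω ∂P) - ∫ ω, K ω * η ω ∂P := by
    have : (fun ω => K ω * Aᶜ.indicator (fun _ => (1:ℝ)) ω)
        = fun ω => K ω - K ω * A.indicator (fun _ => (1:ℝ)) ω := by
      funext ω
      by_cases h : ω ∈ A <;> simp [h]
    rw [this, integral_sub int_K int_Kind, hcond']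
  unfold cost
  rw [e1, e2]
  ring

/-- The key optimality argument. -/
private lemma key {Ω : Type*} [𝒜 : MeasurableSpace Ω] (P : Measure Ω)
    [IsProbabilityMeasure P] (A : Set Ω) (hA : MeasurableSet A)
    (η : Ω → ℝ) (hηM : Measurable η) (hη01 : ∀ ω, η ω ∈ Set.Icc (0:ℝ) 1)
    (α q a b : ℝ) (ha : 0 ≤ a) (hb : 0 ≤ b) (hab : 0 < a + b)
    (hqgt : b / (a + b) < q)
    (G : Ω → ℝ) (hGM : Measurable G) (hG01 : ∀ ω, G ω ∈ Set.Icc (0:ℝ) 1)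
    (hGα : ∫ ω, G ω ∂P = α)
    (hG1 : ∀ ω, q < η ω → G ω = 1) (hG0 : ∀ ω, η ω < q → G ω = 0)
    (hGcond : ∫ ω, η ω * G ω ∂P = ∫ ω, A.indicator (fun _ => (1:ℝ)) ω * G ω ∂P)
    (H : Ω → ℝ) (hHM : Measurable H) (hH01 : ∀ ω, H ω ∈ Set.Icc (0:ℝ) 1)
    (hHα : ∫ ω, H ω ∂P ≤ α)
    (hHcond : ∫ ω, η ω * H ω ∂P = ∫ ω, A.indicator (fun _ => (1:ℝ)) ω * H ω ∂P) :
    cost P A a b G ≤ cost P A a b H := by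
  have hGabs : ∀ ω, |G ω| ≤ 1 := fun ω => abs_le_one_of_Icc (hG01 ω)
  have hHabs : ∀ ω, |H ω| ≤ 1 := fun ω => abs_le_one_of_Icc (hH01 ω)
  have hηabs : ∀ ω, |η ω| ≤ 1 := fun ω => abs_le_one_of_Icc (hη01 ω)
  have habs_mul : ∀ (f g : Ω → ℝ), (∀ ω, |f ω| ≤ 1) → (∀ ω, |g ω| ≤ 1) →
      ∀ ω, |f ω * g ω| ≤ 1 := by
    intro f g hf hg ω
    rw [abs_mul]
    exact mul_le_one₀ (hf ω) (abs_nonneg _) (hg ω)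
  have int_G : Integrable G P := integrable_of_bdd hGM hGabs
  have int_H : Integrable H P := integrable_of_bdd hHM hHabs
  have int_Gη : Integrable (fun ω => G ω * η ω) P :=
    integrable_of_bdd (hGM.mul hηM) (habs_mul _ _ hGabs hηabs)
  have int_Hη : Integrable (fun ω => H ω * η ω) P :=
    integrable_of_bdd (hHM.mul hηM) (habs_mul _ _ hHabs hηabs)
  set X := ∫ ω, G ω * η ω ∂P with hX
  set Y := ∫ ω, H ω * η ω ∂P with hY
  set IH := ∫ ω, H ω ∂P with hIH
  -- pointwise Neyman-Pearson inequality
  have hT1 : ∫ ω, (G ω - H ω) * (q - η ω) ∂P ≤ 0 := by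
    apply integral_nonpos
    intro ω
    rcases lt_trichotomy (η ω) q with h | h | h
    · have := hG0 ω h
      have := (hH01 ω).1
      simp only [Pi.zero_apply]
      nlinarith
    · simp [h]
    · have := hG1 ω h
      have := (hH01 ω).2
      simp only [Pi.zero_apply]
      nlinarith
  have hT1' : ∫ ω, (G ω - H ω) * (q - η ω) ∂P
      = q * (α - IH) - (X - Y) := by
    have : (fun ω => (G ω - H ω) * (q - η ω))
        = fun ω => (q * G ω - q * H ω) - (G ω * η ω - H ω * η ω) := by
      funext ω; ring
    have iqG : Integrable (fun ω => q * G ω) P := int_G.const_mul q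
    have iqH : Integrable (fun ω => q * H ω) P := int_H.const_mul q
    have i1 : Integrable (fun ω => q * G ω - q * H ω) P := iqG.sub iqH
    have i2 : Integrable (fun ω => G ω * η ω - H ω * η ω) P := int_Gη.sub int_Hη
    rw [this, integral_sub i1 i2, integral_sub iqG iqH,
      integral_sub int_Gη int_Hη, integral_const_mul, integral_const_mul, hGα]
    ring
  rw [hT1'] at hT1
  have hcG := cost_eq P A hA a b G η hGM hG01 hηM hη01 hGcond
  have hcH := cost_eq P A hA a b H η hHM hH01 hηM hη01 hHcond
  rw [hcG, hcH, hGα]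
  have hA3 : b < (a + b) * q := by
    rw [mul_comm]; exact (div_lt_iff₀ hab).mp hqgt
  have hA2 : 0 ≤ α - IH := by linarith
  have hp1 : 0 ≤ ((a + b) * q - b) * (α - IH) := mul_nonneg (by linarith) hA2
  have hp2 : (a + b) * (q * (α - IH) - (X - Y)) ≤ 0 :=
    mul_nonpos_of_nonneg_of_nonpos hab.le hT1
  nlinarith



/-- Theorem 1(ii). If `q > b/(a+b)` then `H_q` minimizes the
expected misclassification cost among all RDCs with predicted positive rate at most `α`. -/
theorem Hq_min_cost_of_rate_le
    {Ω : Type*} (ℋ : MeasurableSpace Ω) [𝒜 : MeasurableSpace Ω]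
    (P : Measure Ω) [IsProbabilityMeasure P] (hℋ : ℋ ≤ 𝒜)
    (A : Set Ω) (hA : MeasurableSet A) (hA0 : 0 < P A) (hA1 : P A < 1)
    (hAH : ¬ MeasurableSet[ℋ] A)
    (η : Ω → ℝ) (hηm : Measurable[ℋ] η) (hη01 : ∀ ω, η ω ∈ Set.Icc (0 : ℝ) 1)
    (hηcond : ∀ Z : Ω → ℝ, Measurable[ℋ] Z → (∃ C, ∀ ω, |Z ω| ≤ C) →
      ∫ ω, η ω * Z ω ∂P = ∫ ω, A.indicator (fun _ => (1 : ℝ)) ω * Z ω ∂P)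
    (α : ℝ) (hα : α ∈ Set.Ioo (0 : ℝ) 1)
    (q : ℝ) (hq₁ : (P {ω | η ω < q}).toReal ≤ 1 - α)
    (hq₂ : 1 - α ≤ (P {ω | η ω ≤ q}).toReal)
    (a b : ℝ) (ha : 0 ≤ a) (hb : 0 ≤ b) (hab : 0 < a + b)
    (hqgt : b / (a + b) < q) :
    ∀ H : Ω → ℝ, IsRDC ℋ H → ∫ ω, H ω ∂P ≤ α →
      cost P A a b (Hq P η α q) ≤ cost P A a b H := by
  intro H hH hHα
  obtain ⟨hHmℋ, hH01⟩ := hH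
  have hηM : Measurable η := hηm.mono hℋ le_rfl
  have hHM : Measurable H := hHmℋ.mono hℋ le_rfl
  have hSplusℋ : MeasurableSet[ℋ] {ω' | η ω' > q} := measurableSet_lt measurable_const hηm
  have hS0ℋ : MeasurableSet[ℋ] {ω' | η ω' = q} := hηm (measurableSet_singleton q)
  have hSplusM : MeasurableSet {ω' | η ω' > q} := hℋ _ hSplusℋ
  have hS0M : MeasurableSet {ω' | η ω' = q} := hℋ _ hS0ℋ
  have hSltM : MeasurableSet {ω | η ω < q} := hℋ _ (measurableSet_lt hηm measurable_const)
  have hSleM : MeasurableSet {ω | η ω ≤ q} := hℋ _ (measurableSet_le hηm measurable_const)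
  have hne : ∀ s : Set Ω, P s ≠ ⊤ := fun s => measure_ne_top P s
  have hle_split : (P {ω | η ω ≤ q}).toReal
      = (P {ω | η ω < q}).toReal + (P {ω' | η ω' = q}).toReal := by
    have hdisj : Disjoint {ω | η ω < q} {ω' | η ω' = q} := by
      rw [Set.disjoint_left]
      intro ω h1 h2
      exact absurd h2 (ne_of_lt h1)
    have hunion : {ω | η ω ≤ q} = {ω | η ω < q} ∪ {ω' | η ω' = q} := by
      ext ω
      simp [le_iff_lt_or_eq]
    rw [hunion, measure_union hdisj hS0M, ENNReal.toReal_add (hne _) (hne _)]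
  have hplus : (P {ω' | η ω' > q}).toReal = 1 - (P {ω | η ω ≤ q}).toReal := by
    have h : {ω' | η ω' > q} = {ω | η ω ≤ q}ᶜ := by
      ext ω
      simp [not_le]
    rw [h, measure_compl hSleM (hne _), measure_univ,
      ENNReal.toReal_sub_of_le prob_le_one (by simp), ENNReal.toReal_one]
  have hge : (P {ω' | η ω' > q}).toReal + (P {ω' | η ω' = q}).toReal
      = 1 - (P {ω | η ω < q}).toReal := by
    have hdisj : Disjoint {ω' | η ω' > q} {ω' | η ω' = q} := by
      rw [Set.disjoint_left]
      intro ω h1 h2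
      exact absurd h2 (ne_of_gt h1)
    have hunion : {ω | η ω < q}ᶜ = {ω' | η ω' > q} ∪ {ω' | η ω' = q} := by
      ext ω
      simp only [Set.mem_compl_iff, Set.mem_setOf_eq, not_lt, Set.mem_union]
      constructor
      · intro h
        rcases lt_or_eq_of_le h with h' | h'
        · exact Or.inl h'
        · exact Or.inr h'.symm
      · rintro (h | h)
        · exact le_of_lt h
        · exact le_of_eq h.symm
    have h1 : (P ({ω | η ω < q}ᶜ)).toReal = 1 - (P {ω | η ω < q}).toReal := by
      rw [measure_compl hSltM (hne _), measure_univ,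
        ENNReal.toReal_sub_of_le prob_le_one (by simp), ENNReal.toReal_one]
    rw [← h1, hunion, measure_union hdisj hS0M, ENNReal.toReal_add (hne _) (hne _)]
  have f2 : (P {ω' | η ω' > q}).toReal ≤ α := by rw [hplus]; linarith
  have f3 : α ≤ (P {ω' | η ω' > q}).toReal + (P {ω' | η ω' = q}).toReal := by
    rw [hge]; linarith
  have hHabs : ∀ ω, |H ω| ≤ 1 := fun ω => abs_le_one_of_Icc (hH01 ω)
  have hHcond := hηcond H hHmℋ ⟨1, hHabs⟩
  have int_plus : Integrable ({ω' | η ω' > q}.indicator (fun _ => (1:ℝ))) P :=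
    integrable_of_bdd (measurable_const.indicator hSplusM)
      (fun ω => abs_le_one_of_Icc (ind_mem _ ω))
  by_cases h0 : P {ω' | η ω' = q} = 0
  · have hGdef : Hq P η α q = fun ω => {ω' | η ω' > q}.indicator (fun _ => (1:ℝ)) ω := by
      funext ω
      simp only [Hq, h0, if_true]
    have hp0 : (P {ω' | η ω' = q}).toReal = 0 := by simp [h0]
    have hGMℋ : Measurable[ℋ] (Hq P η α q) := by
      rw [hGdef]
      exact measurable_const.indicator hSplusℋ
    have hG01 : ∀ ω, Hq P η α q ω ∈ Set.Icc (0:ℝ) 1 := by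
      intro ω
      rw [hGdef]
      exact ind_mem _ ω
    have hIG : ∫ ω, Hq P η α q ω ∂P = α := by
      rw [hGdef]
      have := integral_indicator_one (μ := P) hSplusM
      simp only [Pi.one_def] at this
      rw [this, measureReal_def]
      linarith
    have hG1 : ∀ ω, q < η ω → Hq P η α q ω = 1 := by
      intro ω h
      rw [hGdef]
      have h1 : ω ∈ {ω' | η ω' > q} := h
      simp [Set.indicator_of_mem h1]
    have hG0 : ∀ ω, η ω < q → Hq P η α q ω = 0 := by
      intro ω h
      rw [hGdef]
      have h1 : ω ∉ {ω' | η ω' > q} := by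
        simp only [Set.mem_setOf_eq, not_lt]
        exact le_of_lt h
      simp [Set.indicator_of_notMem h1]
    have hGcond := hηcond _ hGMℋ ⟨1, fun ω => abs_le_one_of_Icc (hG01 ω)⟩
    exact key P A hA η hηM hη01 α q a b ha hb hab hqgt _ (hGMℋ.mono hℋ le_rfl)
      hG01 hIG hG1 hG0 hGcond H hHM hH01 hHα hHcond
  · set γ := (α - (P {ω' | η ω' > q}).toReal) / (P {ω' | η ω' = q}).toReal with hγ
    have hGdef : Hq P η α q = fun ω => {ω' | η ω' > q}.indicator (fun _ => (1:ℝ)) ω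
        + γ * {ω' | η ω' = q}.indicator (fun _ => (1:ℝ)) ω := by
      funext ω
      simp only [Hq, h0, if_false]
      rw [hγ]
    have hp0pos : 0 < (P {ω' | η ω' = q}).toReal := ENNReal.toReal_pos h0 (hne _)
    have hγ0 : 0 ≤ γ := div_nonneg (by linarith) hp0pos.le
    have hγ1 : γ ≤ 1 := (div_le_one hp0pos).mpr (by linarith)
    have hG1 : ∀ ω, q < η ω → Hq P η α q ω = 1 := by
      intro ω h
      rw [hGdef]
      have h1 : ω ∈ {ω' | η ω' > q} := h
      have h2 : ω ∉ {ω' | η ω' = q} := ne_of_gt h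
      simp [Set.indicator_of_mem h1, Set.indicator_of_notMem h2]
    have hG0 : ∀ ω, η ω < q → Hq P η α q ω = 0 := by
      intro ω h
      rw [hGdef]
      have h1 : ω ∉ {ω' | η ω' > q} := by simp [Set.mem_setOf_eq, not_lt, le_of_lt h]
      have h2 : ω ∉ {ω' | η ω' = q} := ne_of_lt h
      simp [Set.indicator_of_notMem h1, Set.indicator_of_notMem h2]
    have hGeq : ∀ ω, η ω = q → Hq P η α q ω = γ := by
      intro ω h
      rw [hGdef]
      have h1 : ω ∉ {ω' | η ω' > q} := by simp [Set.mem_setOf_eq, not_lt, le_of_eq h]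
      have h2 : ω ∈ {ω' | η ω' = q} := h
      simp [Set.indicator_of_notMem h1, Set.indicator_of_mem h2]
    have hG01 : ∀ ω, Hq P η α q ω ∈ Set.Icc (0:ℝ) 1 := by
      intro ω
      rcases lt_trichotomy (η ω) q with h | h | h
      · rw [hG0 ω h]; exact ⟨le_refl _, by norm_num⟩
      · rw [hGeq ω h]; exact ⟨hγ0, hγ1⟩
      · rw [hG1 ω h]; exact ⟨by norm_num, le_refl _⟩
    have hGMℋ : Measurable[ℋ] (Hq P η α q) := by
      rw [hGdef]
      exact (measurable_const.indicator hSplusℋ).add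
        ((measurable_const.indicator hS0ℋ).const_mul γ)
    have int_0 : Integrable ({ω' | η ω' = q}.indicator (fun _ => (1:ℝ))) P :=
      integrable_of_bdd (measurable_const.indicator hS0M)
        (fun ω => abs_le_one_of_Icc (ind_mem _ ω))
    have hIG : ∫ ω, Hq P η α q ω ∂P = α := by
      rw [hGdef, integral_add int_plus (int_0.const_mul γ), integral_const_mul]
      have e1 := integral_indicator_one (μ := P) hSplusM
      have e2 := integral_indicator_one (μ := P) hS0M
      simp only [Pi.one_def] at e1 e2
      rw [measureReal_def] at e1 e2
      rw [e1, e2, hγ, div_mul_cancel₀ _ hp0pos.ne']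
      ring
    have hGcond := hηcond _ hGMℋ ⟨1, fun ω => abs_le_one_of_Icc (hG01 ω)⟩
    exact key P A hA η hηM hη01 α q a b ha hb hab hqgt _ (hGMℋ.mono hℋ le_rfl)
      hG01 hIG hG1 hG0 hGcond H hHM hH01 hHα hHcond
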